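/- Let (G, ·, B) be a Rota–Baxter group of weight 1. Then the binary operation g * h = g·B(g)·h·B(g)⁻¹ makes G into a group (with the same identity element, and with inverse of g given by B(g)⁻¹ g⁻¹ B(g)). -/

import Mathlib

/-- The derived operation `g * h = g ⬝ B g ⬝ h ⬝ (B g)⁻¹` of a Rota–Baxter group
is again a group operation, with the same identity element and with inverse
of `g` given by `(B g)⁻¹ * g⁻¹ * B g`. -/
theorem rb_derived_group {G : Type*} [Group G] (B : G → G)
    (hB : ∀ g h : G, B g * B h = B (g * B g * h * (B g)⁻¹)) :
    (∀ g h k : G,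
        ((g * B g * h * (B g)⁻¹) * B (g * B g * h * (B g)⁻¹) * k
          * (B (g * B g * h * (B g)⁻¹))⁻¹)
        = g * B g * (h * B h * k * (B h)⁻¹) * (B g)⁻¹) ∧
    (∀ g : G, (1 : G) * B 1 * g * (B 1)⁻¹ = g) ∧
    (∀ g : G, g * B g * 1 * (B g)⁻¹ = g) ∧
    (∀ g : G, g * B g * ((B g)⁻¹ * g⁻¹ * B g) * (B g)⁻¹ = 1) ∧
    (∀ g : G, ((B g)⁻¹ * g⁻¹ * B g) * B ((B g)⁻¹ * g⁻¹ * B g) * g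
        * (B ((B g)⁻¹ * g⁻¹ * B g))⁻¹ = 1) := by
  have hB1 : B 1 = 1 := by
    have h := hB 1 1
    simp only [one_mul, mul_one, mul_inv_cancel] at h
    exact mul_eq_left.mp h
  have hBinv : ∀ g : G, B ((B g)⁻¹ * g⁻¹ * B g) = (B g)⁻¹ := by
    intro g
    have h := hB g ((B g)⁻¹ * g⁻¹ * B g)
    have h2 : g * B g * ((B g)⁻¹ * g⁻¹ * B g) * (B g)⁻¹ = 1 := by group
    rw [h2, hB1] at h
    exact eq_inv_of_mul_eq_one_right h
  refine ⟨?_, ?_, ?_, ?_, ?_⟩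
  · intro g h k
    rw [← hB g h]
    group
  · intro g; rw [hB1]; group
  · intro g; group
  · intro g; group
  · intro g; rw [hBinv]; group
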